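/- For every p with 2 < p < ∞ there exists C_p > 0 such that for all f ∈ H²(ℝ), ‖f‖_{L^p(ℝ)}^p ≤ C_p ‖f''‖_{L²}^{(p/4 - 1/2)} ‖f‖_{L²}^{(3p/4 + 1/2)}. -/

import Mathlib

open MeasureTheory Real

private lemma gn_abs_mul_le_half (a b : ℝ) : |a * b| ≤ (a ^ 2 + b ^ 2) / 2 := by
  rw [abs_mul]
  nlinarith [sq_nonneg (|a| - |b|), sq_abs a, sq_abs b, abs_nonneg a, abs_nonneg b]

private lemma gn_integrable_mul {u v : ℝ → ℝ} (hu : Continuous u) (hv : Continuous v)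
    (hu2 : Integrable (fun x => u x ^ 2)) (hv2 : Integrable (fun x => v x ^ 2)) :
    Integrable (fun x => u x * v x) := by
  refine Integrable.mono' ((hu2.add hv2).div_const 2) (hu.mul hv).aestronglyMeasurable ?_
  filter_upwards with x
  simpa [Real.norm_eq_abs, abs_mul] using gn_abs_mul_le_half (u x) (v x)

private lemma gn_cs {u v : ℝ → ℝ} (hu : Continuous u) (hv : Continuous v)
    (hu2 : Integrable (fun x => u x ^ 2)) (hv2 : Integrable (fun x => v x ^ 2)) :
    ∫ x : ℝ, |u x| * |v x| ≤
      (∫ x : ℝ, u x ^ 2) ^ ((1 : ℝ) / 2) * (∫ x : ℝ, v x ^ 2) ^ ((1 : ℝ) / 2) := by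
  have hpq : Real.HolderConjugate 2 2 := Real.HolderConjugate.two_two
  have habs : ∀ y : ℝ, |y| ^ (2 : ℝ) = y ^ 2 := fun y => by
    rw [show (2 : ℝ) = ((2 : ℕ) : ℝ) by norm_num, Real.rpow_natCast, sq_abs]
  have hmu : MemLp (fun x => |u x|) (ENNReal.ofReal 2) := by
    rw [show ENNReal.ofReal 2 = 2 by norm_num,
      memLp_two_iff_integrable_sq hu.abs.aestronglyMeasurable]
    simpa [sq_abs] using hu2
  have hmv : MemLp (fun x => |v x|) (ENNReal.ofReal 2) := by
    rw [show ENNReal.ofReal 2 = 2 by norm_num,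
      memLp_two_iff_integrable_sq hv.abs.aestronglyMeasurable]
    simpa [sq_abs] using hv2
  have := integral_mul_le_Lp_mul_Lq_of_nonneg hpq
    (Filter.Eventually.of_forall fun x => abs_nonneg (u x))
    (Filter.Eventually.of_forall fun x => abs_nonneg (v x)) hmu hmv
  simpa [habs] using this

private lemma gn_pointwise (p y K : ℝ) (hp : 2 < p) (hy : y ^ 2 ≤ K) :
    |y| ^ p ≤ K ^ ((p-2)/2) * y ^ 2 := by
  have h1 : |y| ^ p = (y ^ 2) ^ (p/2) := by
    rw [← sq_abs y, ← Real.rpow_natCast |y| 2, ← Real.rpow_mul (abs_nonneg y)]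
    norm_num
    rw [show 2 * (p/2) = p by ring]
  have h2 : (y ^ 2 : ℝ) ^ (p/2) = (y ^ 2) ^ ((p-2)/2) * (y ^ 2) ^ (1:ℝ) := by
    rw [← Real.rpow_add' (sq_nonneg y) (by intro h; linarith)]
    ring_nf
  rw [h1, h2, Real.rpow_one]
  exact mul_le_mul_of_nonneg_right
    (Real.rpow_le_rpow (sq_nonneg y) hy (by linarith)) (sq_nonneg y)

private lemma gn_algebra (p A D : ℝ) (hp : 2 < p) (hA : 0 ≤ A) (hD : 0 ≤ D) :
    (2 * A ^ ((1:ℝ)/2) * (A ^ ((1:ℝ)/2) * D ^ ((1:ℝ)/2)) ^ ((1:ℝ)/2)) ^ ((p-2)/2) * A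
      = 2 ^ ((p-2)/2) * (D ^ ((1:ℝ)/2)) ^ (p/4 - 1/2) * (A ^ ((1:ℝ)/2)) ^ (3*p/4 + 1/2) := by
  rcases eq_or_lt_of_le hA with hA0 | hApos
  · rw [← hA0]
    rw [Real.zero_rpow (by norm_num : (1:ℝ)/2 ≠ 0),
      Real.zero_rpow (by intro h; linarith : 3*p/4 + 1/2 ≠ 0)]
    ring
  rcases eq_or_lt_of_le hD with hD0 | hDpos
  · rw [← hD0]
    rw [Real.zero_rpow (by norm_num : (1:ℝ)/2 ≠ 0), mul_zero,
      Real.zero_rpow (by norm_num : (1:ℝ)/2 ≠ 0), mul_zero,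
      Real.zero_rpow (by intro h; linarith : (p-2)/2 ≠ 0),
      Real.zero_rpow (by intro h; linarith : p/4 - 1/2 ≠ 0)]
    ring
  have hL : 0 < (2 * A ^ ((1:ℝ)/2) * (A ^ ((1:ℝ)/2) * D ^ ((1:ℝ)/2)) ^ ((1:ℝ)/2)) ^ ((p-2)/2) * A := by
    positivity
  have hR : 0 < 2 ^ ((p-2)/2) * (D ^ ((1:ℝ)/2)) ^ (p/4 - 1/2) * (A ^ ((1:ℝ)/2)) ^ (3*p/4 + 1/2) := by
    positivity
  rw [← Real.exp_log hL, ← Real.exp_log hR]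
  congr 1
  have l1 : Real.log ((A ^ ((1:ℝ)/2) * D ^ ((1:ℝ)/2)) ^ ((1:ℝ)/2))
      = (1/2) * ((1/2) * Real.log A + (1/2) * Real.log D) := by
    rw [Real.log_rpow (by positivity), Real.log_mul (by positivity) (by positivity),
      Real.log_rpow hApos, Real.log_rpow hDpos]
  have l2 : Real.log (2 * A ^ ((1:ℝ)/2) * (A ^ ((1:ℝ)/2) * D ^ ((1:ℝ)/2)) ^ ((1:ℝ)/2))
      = Real.log 2 + (1/2) * Real.log A + (1/2) * ((1/2) * Real.log A + (1/2) * Real.log D) := by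
    rw [Real.log_mul (by positivity) (by positivity), Real.log_mul (by positivity) (by positivity),
      Real.log_rpow hApos, l1]
  rw [Real.log_mul (by positivity) (by positivity), Real.log_rpow (by positivity), l2,
    Real.log_mul (by positivity) (by positivity), Real.log_mul (by positivity) (by positivity),
    Real.log_rpow (by norm_num : (0:ℝ) < 2),
    Real.log_rpow (show (0:ℝ) < D ^ ((1:ℝ)/2) by positivity), Real.log_rpow hDpos,
    Real.log_rpow (show (0:ℝ) < A ^ ((1:ℝ)/2) by positivity), Real.log_rpow hApos]
  ring

/-- Gagliardo–Nirenberg inequality on H²(ℝ):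
    `‖f‖_{L^p}^p ≤ C_p ‖f''‖_{L²}^{p/4 - 1/2} ‖f‖_{L²}^{3p/4 + 1/2}` for `2 < p < ∞`. -/
theorem stmt_5 (p : ℝ) (hp : 2 < p) :
    ∃ C > 0, ∀ f : ℝ → ℝ, ContDiff ℝ 2 f →
      Integrable (fun x => (f x) ^ 2) → Integrable (fun x => (deriv f x) ^ 2) →
      Integrable (fun x => (deriv (deriv f) x) ^ 2) →
      (∫ x : ℝ, |f x| ^ p) ≤
        C * ((∫ x : ℝ, (deriv (deriv f) x) ^ 2) ^ ((1 : ℝ) / 2)) ^ (p / 4 - 1 / 2) *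
          ((∫ x : ℝ, (f x) ^ 2) ^ ((1 : ℝ) / 2)) ^ (3 * p / 4 + 1 / 2) := by
  refine ⟨2 ^ ((p-2)/2), Real.rpow_pos_of_pos two_pos _, ?_⟩
  intro f hf h0 h1 h2
  -- smoothness facts
  have hcd1 : ContDiff ℝ 1 (deriv f) := by
    have h2' : ContDiff ℝ (1 + 1) f := by exact_mod_cast hf
    exact (contDiff_succ_iff_deriv.mp h2').2.2
  have hdf : Differentiable ℝ f := hf.differentiable two_ne_zero
  have hdf' : Differentiable ℝ (deriv f) := hcd1.differentiable one_ne_zero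
  have hcf : Continuous f := hdf.continuous
  have hcf' : Continuous (deriv f) := hdf'.continuous
  have hcf'' : Continuous (deriv (deriv f)) := (contDiff_one_iff_deriv.mp hcd1).2
  -- integrable products
  have iff' : Integrable (fun x => f x * deriv f x) := gn_integrable_mul hcf hcf' h0 h1
  have iff'' : Integrable (fun x => f x * deriv (deriv f) x) := gn_integrable_mul hcf hcf'' h0 h2
  -- decay of f² at ±∞
  have hg : ∀ x : ℝ, HasDerivAt (fun y => f y ^ 2) (2 * f x * deriv f x) x := by
    intro x
    simpa [mul_comm] using ((hdf x).hasDerivAt.fun_pow 2)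
  have hgint : Integrable (fun x => 2 * f x * deriv f x) := by
    simpa [mul_assoc] using iff'.const_mul 2
  have bot0 : Filter.Tendsto (fun x => f x ^ 2) Filter.atBot (nhds 0) :=
    tendsto_zero_of_hasDerivAt_of_integrableOn_Iic (a := 0)
      (fun x _ => hg x) hgint.integrableOn h0.integrableOn
  -- decay of f·f' at ±∞
  have hh : ∀ x : ℝ, HasDerivAt (fun y => f y * deriv f y)
      (deriv f x * deriv f x + f x * deriv (deriv f) x) x :=
    fun x => (hdf x).hasDerivAt.mul (hdf' x).hasDerivAt
  have h1' : Integrable (fun x => deriv f x * deriv f x) := by simpa [pow_two] using h1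
  have hhint : Integrable (fun x => deriv f x * deriv f x + f x * deriv (deriv f) x) :=
    h1'.add iff''
  have top1 : Filter.Tendsto (fun x => f x * deriv f x) Filter.atTop (nhds 0) :=
    tendsto_zero_of_hasDerivAt_of_integrableOn_Ioi (a := 0)
      (fun x _ => hh x) hhint.integrableOn iff'.integrableOn
  have bot1 : Filter.Tendsto (fun x => f x * deriv f x) Filter.atBot (nhds 0) :=
    tendsto_zero_of_hasDerivAt_of_integrableOn_Iic (a := 0)
      (fun x _ => hh x) hhint.integrableOn iff'.integrableOn
  -- integration by parts : ∫ (f')² = -∫ f f''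
  have key : (∫ x : ℝ, (deriv f x * deriv f x + f x * deriv (deriv f) x)) = 0 - 0 :=
    integral_of_hasDerivAt_of_tendsto hh hhint bot1 top1
  rw [integral_add h1' iff''] at key
  -- interpolation : ∫ (f')² ≤ ‖f‖₂ ‖f''‖₂
  have hB : (∫ x : ℝ, deriv f x ^ 2)
      ≤ (∫ x : ℝ, f x ^ 2) ^ ((1:ℝ)/2) * (∫ x : ℝ, deriv (deriv f) x ^ 2) ^ ((1:ℝ)/2) := by
    have e1 : (∫ x : ℝ, deriv f x ^ 2) = - ∫ x : ℝ, f x * deriv (deriv f) x := by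
      simp only [pow_two]; linarith
    have e2 : - (∫ x : ℝ, f x * deriv (deriv f) x) ≤ ∫ x : ℝ, |f x| * |deriv (deriv f) x| := by
      have := norm_integral_le_integral_norm (μ := volume) (fun x => f x * deriv (deriv f) x)
      simp only [Real.norm_eq_abs, abs_mul] at this
      calc - (∫ x : ℝ, f x * deriv (deriv f) x) ≤ |∫ x : ℝ, f x * deriv (deriv f) x| :=
        neg_le_abs _
      _ ≤ _ := this
    rw [e1]
    exact e2.trans (gn_cs hcf hcf'' h0 h2)
  -- Agmon : pointwise bound on f²
  have habsint : Integrable (fun x => 2 * (|f x| * |deriv f x|)) := by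
    have : Integrable (fun x => |f x * deriv f x|) := iff'.abs
    simpa [abs_mul, mul_assoc] using this.const_mul 2
  have agmon : ∀ x : ℝ, f x ^ 2
      ≤ 2 * (∫ x : ℝ, f x ^ 2) ^ ((1:ℝ)/2) * (∫ x : ℝ, deriv f x ^ 2) ^ ((1:ℝ)/2) := by
    intro x
    have hkey : (∫ t in Set.Iic x, 2 * f t * deriv f t) = f x ^ 2 - 0 :=
      integral_Iic_of_hasDerivAt_of_tendsto' (fun t _ => hg t) hgint.integrableOn bot0
    have step1 : (∫ t in Set.Iic x, 2 * f t * deriv f t)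
        ≤ ∫ t in Set.Iic x, 2 * (|f t| * |deriv f t|) := by
      refine integral_mono_ae hgint.integrableOn habsint.integrableOn ?_
      filter_upwards with t
      calc 2 * f t * deriv f t ≤ |2 * f t * deriv f t| := le_abs_self _
      _ = 2 * (|f t| * |deriv f t|) := by
          rw [abs_mul, abs_mul]; simp [abs_of_nonneg, mul_assoc]
    have step2 : (∫ t in Set.Iic x, 2 * (|f t| * |deriv f t|))
        ≤ ∫ t : ℝ, 2 * (|f t| * |deriv f t|) := by
      refine setIntegral_le_integral habsint ?_
      filter_upwards with t
      positivity
    simp only [integral_const_mul] at step1 step2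
    have hcs := gn_cs hcf hcf' h0 h1
    have : f x ^ 2 ≤ 2 * ∫ t : ℝ, |f t| * |deriv f t| := by linarith
    calc f x ^ 2 ≤ 2 * ∫ t : ℝ, |f t| * |deriv f t| := this
    _ ≤ 2 * ((∫ x : ℝ, f x ^ 2) ^ ((1:ℝ)/2) * (∫ x : ℝ, deriv f x ^ 2) ^ ((1:ℝ)/2)) :=
        mul_le_mul_of_nonneg_left hcs (by norm_num)
    _ = _ := by ring
  -- put things together
  set A := ∫ x : ℝ, f x ^ 2 with hAdef
  set B := ∫ x : ℝ, deriv f x ^ 2 with hBdef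
  set D := ∫ x : ℝ, deriv (deriv f) x ^ 2 with hDdef
  have hA : 0 ≤ A := integral_nonneg fun x => sq_nonneg _
  have hB0 : 0 ≤ B := integral_nonneg fun x => sq_nonneg _
  have hD : 0 ≤ D := integral_nonneg fun x => sq_nonneg _
  set K := 2 * A ^ ((1:ℝ)/2) * B ^ ((1:ℝ)/2) with hKdef
  have hK0 : 0 ≤ K := by positivity
  have hIp : (∫ x : ℝ, |f x| ^ p) ≤ K ^ ((p-2)/2) * A := by
    have hmono : (∫ x : ℝ, |f x| ^ p) ≤ ∫ x : ℝ, K ^ ((p-2)/2) * f x ^ 2 := by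
      refine integral_mono_of_nonneg ?_ (h0.const_mul _) ?_
      · filter_upwards with x
        positivity
      · filter_upwards with x
        exact gn_pointwise p (f x) K hp (agmon x)
    rwa [integral_const_mul] at hmono
  have hfinal : K ^ ((p-2)/2) * A
      ≤ 2 ^ ((p-2)/2) * (D ^ ((1:ℝ)/2)) ^ (p/4 - 1/2) * (A ^ ((1:ℝ)/2)) ^ (3*p/4 + 1/2) := by
    rw [← gn_algebra p A D hp hA hD]
    refine mul_le_mul_of_nonneg_right ?_ hA
    refine Real.rpow_le_rpow hK0 ?_ (by linarith)
    rw [hKdef]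
    refine mul_le_mul_of_nonneg_left ?_ (by positivity)
    exact Real.rpow_le_rpow hB0 hB (by norm_num)
  calc (∫ x : ℝ, |f x| ^ p) ≤ K ^ ((p-2)/2) * A := hIp
  _ ≤ 2 ^ ((p-2)/2) * (D ^ ((1:ℝ)/2)) ^ (p/4 - 1/2) * (A ^ ((1:ℝ)/2)) ^ (3*p/4 + 1/2) := hfinal
  _ = _ := by norm_num
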